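/- If k is a positive integer with s_k(a) ≤ c - 1, then t_k(a,b,c) is not in the additive submonoid generated by { t_0(a,b,c), t_1(a,b,c), …, t_{k-1}(a,b,c) }. -/

import Mathlib

/-- `sF a k = Σ_{i=0}^{k-1} a^i` (so `sF a 0 = 0`). -/
def sF (a k : ℕ) : ℕ := ∑ i ∈ Finset.range k, a ^ i

/-- `tF a b c k = a^k * c + b * sF a k`. -/
def tF (a b c k : ℕ) : ℕ := a ^ k * c + b * sF a k

/-- A θ_{a,b}-semigroup: contains 0, closed under addition, and closed under
`x ↦ a*x + b` on nonzero elements. -/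
def IsThetaSG (a b : ℕ) (S : Set ℕ) : Prop :=
  0 ∈ S ∧ (∀ x ∈ S, ∀ y ∈ S, x + y ∈ S) ∧ ∀ y ∈ S, y ≠ 0 → a * y + b ∈ S

/-- `Gset a b c` : the smallest θ_{a,b}-semigroup containing `c`. -/
def Gset (a b c : ℕ) : Set ℕ := ⋂₀ {S : Set ℕ | IsThetaSG a b S ∧ c ∈ S}

/-- `Hmon a b c` : additive submonoid generated by the `tF a b c k`. -/
def Hmon (a b c : ℕ) : AddSubmonoid ℕ :=
  AddSubmonoid.closure {x | ∃ k, x = tF a b c k}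

/-- `{j_i}_{i=1}^k` is `a`-reduced. -/
def AReduced (a k : ℕ) (j : ℕ → ℕ) : Prop :=
  (∀ i, 1 ≤ i → i ≤ k → j i ≤ a) ∧ j k ≠ 0 ∧
  ∀ m, 1 ≤ m → m ≤ k → j m = a → ∀ i, 1 ≤ i → i < m → j i = 0

theorem stmt7 (a b c : ℕ) (ha : 0 < a) (hb : 0 < b) (hc : 2 ≤ c)
    (hcop : Nat.gcd b c = 1) (k : ℕ) (hk : 1 ≤ k) (hs : sF a k ≤ c - 1) :
    tF a b c k ∉ AddSubmonoid.closure {x | ∃ i < k, x = tF a b c i} := by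
  intro hmem
  set d := c * (a - 1) + b with hd
  have hd0 : 0 < d := by positivity
  have hpow : ∀ m, a ^ m = (a - 1) * sF a m + 1 := by
    intro m
    induction m with
    | zero => simp [sF]
    | succ n ih =>
      have hsucc : sF a (n + 1) = sF a n + a ^ n := by
        simp [sF, Finset.sum_range_succ]
      rw [hsucc, Nat.mul_add, pow_succ]
      have e1 : (a - 1) * a ^ n = a * a ^ n - a ^ n := by
        rw [Nat.sub_one_mul]
      have e2 : a ^ n ≤ a * a ^ n := Nat.le_mul_of_pos_left _ ha
      have e3 : a * a ^ n = a ^ n * a := Nat.mul_comm _ _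
      omega
  have htk : ∀ m, tF a b c m = d * sF a m + c := by
    intro m
    rw [tF, hpow m, hd]
    ring
  have key : ∃ S N : ℕ, tF a b c k = d * S + c * N ∧ (N = 0 → S = 0) ∧
      (N = 1 → ∃ i < k, S = sF a i) := by
    refine AddSubmonoid.closure_induction ?_ ?_ ?_ hmem
    · rintro x ⟨i, hik, rfl⟩
      exact ⟨sF a i, 1, by rw [htk i]; ring, by omega, fun _ => ⟨i, hik, rfl⟩⟩
    · exact ⟨0, 0, by simp, fun _ => rfl, by omega⟩
    · rintro x y _ _ ⟨S, N, hx, hx0, hx1⟩ ⟨S', N', hy, hy0, hy1⟩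
      refine ⟨S + S', N + N', by rw [hx, hy]; ring, ?_, ?_⟩
      · intro h
        have hN : N = 0 := by omega
        have hN' : N' = 0 := by omega
        rw [hx0 hN, hy0 hN']
      intro h
      rcases Nat.eq_zero_or_pos N with h0 | h0
      · obtain ⟨i, hik, hSi⟩ := hy1 (by omega)
        exact ⟨i, hik, by rw [hx0 h0, hSi, Nat.zero_add]⟩
      · obtain ⟨i, hik, hSi⟩ := hx1 (by omega)
        exact ⟨i, hik, by rw [hy0 (by omega), hSi, Nat.add_zero]⟩
  obtain ⟨S, N, heq, h0, h1⟩ := key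
  rw [htk k] at heq
  rcases Nat.eq_zero_or_pos N with hN | hN
  · rw [h0 hN, hN] at heq
    omega
  · -- d * sF a k + c = d * S + c * N, N ≥ 1
    have heq2 : d * sF a k = d * S + c * (N - 1) := by
      have : c * N = c * (N - 1) + c := by
        rw [← Nat.mul_succ]
        congr 1
        omega
      omega
    have hSle : S ≤ sF a k := by
      by_contra hlt
      push_neg at hlt
      have : d * sF a k < d * S := (Nat.mul_lt_mul_left hd0).2 hlt
      omega
    have hdvd : c ∣ d * (sF a k - S) := ⟨N - 1, by
      have e1 : d * (sF a k - S) = d * sF a k - d * S := Nat.mul_sub d (sF a k) S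
      omega⟩
    have hcopdc : Nat.Coprime d c := by
      have : Nat.gcd (b + c * (a - 1)) c = Nat.gcd b c :=
        Nat.gcd_add_mul_left_left c b (a - 1)
      have hd' : d = b + c * (a - 1) := by omega
      rw [Nat.Coprime, hd', this, hcop]
    have hdvd2 : c ∣ sF a k - S := (Nat.Coprime.dvd_of_dvd_mul_left
      (Nat.Coprime.symm hcopdc) hdvd)
    have hSeq : S = sF a k := by
      have : sF a k - S < c := by omega
      have h4 := Nat.eq_zero_of_dvd_of_lt hdvd2 this
      omega
    have hN1 : N = 1 := by
      rw [hSeq] at heq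
      have : c * N = c * 1 := by omega
      exact Nat.eq_of_mul_eq_mul_left (by omega) this
    obtain ⟨i, hik, hSi⟩ := h1 hN1
    -- sF a i < sF a k
    have hmono : sF a i < sF a k := by
      have h1' : sF a (i + 1) ≤ sF a k :=
        Finset.sum_le_sum_of_subset (Finset.range_subset_range.2 hik)
    -- sF a (i+1) = sF a i + a^i
      have h2' : sF a (i + 1) = sF a i + a ^ i := by
        simp [sF, Finset.sum_range_succ]
      have h3' : 0 < a ^ i := Nat.pow_pos ha
      omega
    omega
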